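/- Let k ≠ 0, k₁ ≠ 0, k₃ ≠ 0, k₄, c₀ ≠ 0 be real constants with k₁ ≠ −k₃, and let f₁(t) = 3k₁ e^{k t} + k k₄ be positive on an interval. Define B(t) = b₀ e^{k t} (b₀ ≠ 0), τ(t) = k₄ e^{−k t} + 3k₁/k, and C(t) = c₀ e^{k t} f₁(t)^{−2k₃/(3k₁) − 4/3}. Then τ(t)·B(t)·C'(t) − τ(t)·B'(t)·C(t) + (4k₁ + 2k₃)·B(t)·C(t) = 0 for all t in the interval. -/

import Mathlib

open Real

theorem stmt12 (k k₁ k₃ k₄ c₀ b₀ : ℝ)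
    (hk : k ≠ 0) (hk₁ : k₁ ≠ 0) (hk₃ : k₃ ≠ 0) (hc₀ : c₀ ≠ 0) (hb₀ : b₀ ≠ 0)
    (hk₁₃ : k₁ ≠ -k₃)
    (f₁ B τ C : ℝ → ℝ)
    (hf₁ : ∀ t, f₁ t = 3 * k₁ * exp (k * t) + k * k₄)
    (hB : ∀ t, B t = b₀ * exp (k * t))
    (hτ : ∀ t, τ t = k₄ * exp (-k * t) + 3 * k₁ / k)
    (hC : ∀ t, C t = c₀ * exp (k * t) * f₁ t ^ (-2 * k₃ / (3 * k₁) - 4/3)) :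
    ∀ t, f₁ t > 0 →
      τ t * B t * deriv C t - τ t * deriv B t * C t
        + (4 * k₁ + 2 * k₃) * B t * C t = 0 := by
  intro t ht
  set p : ℝ := -2 * k₃ / (3 * k₁) - 4/3 with hp
  have hCf : C = fun t => c₀ * exp (k * t) * (3 * k₁ * exp (k * t) + k * k₄) ^ p := by
    funext s; rw [hC s, hf₁ s]
  have hBf : B = fun t => b₀ * exp (k * t) := funext hB
  have hF : (3 * k₁ * exp (k * t) + k * k₄) = f₁ t := (hf₁ t).symm
  have hFne : (3 * k₁ * exp (k * t) + k * k₄) ≠ 0 := by rw [hF]; exact ne_of_gt ht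
  have h1 : HasDerivAt (fun s : ℝ => exp (k * s)) (exp (k * t) * k) t := by
    have := (Real.hasDerivAt_exp (k * t)).comp t ((hasDerivAt_id t).const_mul k)
    simpa [Function.comp_def] using this
  have hg : HasDerivAt (fun s : ℝ => 3 * k₁ * exp (k * s) + k * k₄)
      (3 * k₁ * (exp (k * t) * k)) t := ((h1.const_mul (3 * k₁)).add_const _)
  have hgp := hg.rpow_const (p := p) (Or.inl hFne)
  have hC' : HasDerivAt C
      (c₀ * (exp (k * t) * k) * (3 * k₁ * exp (k * t) + k * k₄) ^ p
        + c₀ * exp (k * t) * (3 * k₁ * (exp (k * t) * k) * p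
          * (3 * k₁ * exp (k * t) + k * k₄) ^ (p - 1))) t := by
    rw [hCf]
    exact (h1.const_mul c₀).mul hgp
  have hB' : HasDerivAt B (b₀ * (exp (k * t) * k)) t := by
    rw [hBf]; exact h1.const_mul b₀
  rw [hC'.deriv, hB'.deriv, hB t, hτ t, hC t]
  rw [hF] at *
  have hsub : f₁ t ^ (p - 1) = f₁ t ^ p / f₁ t := by
    rw [Real.rpow_sub ht, Real.rpow_one]
  rw [hsub]
  have hexp : exp (-k * t) = (exp (k * t))⁻¹ := by
    rw [← Real.exp_neg]; ring_nf
  rw [hexp]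
  have hFe : ne_of_gt ht = ne_of_gt ht := rfl
  have hFne' : f₁ t ≠ 0 := ne_of_gt ht
  have hE : exp (k * t) ≠ 0 := (Real.exp_pos _).ne'
  have hkey : 3 * k₁ * p = -2 * k₃ - 4 * k₁ := by
    rw [hp]; field_simp
  -- reduce the goal to a polynomial identity
  have hf : f₁ t = 3 * k₁ * exp (k * t) + k * k₄ := hf₁ t
  clear_value p
  field_simp
  linear_combination (b₀ * c₀ * exp (k * t) ^ 2 * f₁ t ^ p) *
    ((k₄ * k + 3 * k₁ * exp (k * t)) * hkey + (4 * k₁ + 2 * k₃) * hf)
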